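/- Let A be a unital associative ℂ-algebra and let σ₁,σ₂ ∈ A be such that (σ₁,σ₂) satisfies the B₃ relations. Let z ∈ ℂ with z ≠ 1 and such that 1 − zσ₁ and 1 − zσ₂ are invertible. Set Hᵢ(z) = σᵢ(1 − zσᵢ)⁻¹. Then σ₂H₁(z) − H₂(z)σ₁ = (z/(z−1))·(σ₂²σ₁ − σ₂σ₁² + σ₁² − σ₂²) + σ₂ − σ₁ + H₁(z) − H₂(z). -/

import Mathlib

/-- The pair `(x, y)` satisfies the defining relations of the algebra `B₃`. -/
def SatisfiesB3 {A : Type*} [Ring A] (x y : A) : Prop :=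
  x * y * x = y * x * y ∧
  x ^ 2 * y - x * y ^ 2 = x ^ 2 - y ^ 2 + y - x ∧
  y ^ 3 * x - y * x ^ 3 = y ^ 2 * x - y * x ^ 2 + y ^ 3 - x ^ 3 - y ^ 2 + x ^ 2 ∧
  y ^ 4 * x - y * x ^ 4 = y ^ 2 * x - y * x ^ 2 + y ^ 4 - x ^ 4 - y ^ 2 + x ^ 2

/-- `H_s(w) = s * (1 - w • s)⁻¹`, with the inverse taken via `Ring.inverse`. -/
noncomputable def Hfun {A : Type*} [Ring A] [Algebra ℂ A] (s : A) (w : ℂ) : A :=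
  s * Ring.inverse (1 - w • s)

/-- Relation (2.24) of the paper for `B₃`:
`σ₂H₁(z) - H₂(z)σ₁ = (z/(z-1))(σ₂²σ₁ - σ₂σ₁² + σ₁² - σ₂²) + σ₂ - σ₁ + H₁(z) - H₂(z)`. -/
theorem B3_H_lemma {A : Type*} [Ring A] [Algebra ℂ A] (σ₁ σ₂ : A)
    (hrel : SatisfiesB3 σ₁ σ₂)
    (z : ℂ) (hz : z ≠ 1)
    (h1 : IsUnit (1 - z • σ₁)) (h2 : IsUnit (1 - z • σ₂)) :
    σ₂ * Hfun σ₁ z - Hfun σ₂ z * σ₁ =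
      (z / (z - 1)) • (σ₂ ^ 2 * σ₁ - σ₂ * σ₁ ^ 2 + σ₁ ^ 2 - σ₂ ^ 2) +
        σ₂ - σ₁ + Hfun σ₁ z - Hfun σ₂ z := by
  obtain ⟨hB1, hB2, hB3, hB4⟩ := hrel
  have hz1 : z - 1 ≠ 0 := sub_ne_zero.mpr hz
  have d1 : σ₁ * σ₂ * σ₁ - σ₂ * σ₁ * σ₂ = 0 := sub_eq_zero_of_eq hB1
  have d2 : σ₁ ^ 2 * σ₂ - σ₁ * σ₂ ^ 2 - (σ₁ ^ 2 - σ₂ ^ 2 + σ₂ - σ₁) = 0 := by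
    rw [hB2]; exact sub_self _
  have d3 : σ₂ ^ 3 * σ₁ - σ₂ * σ₁ ^ 3 -
      (σ₂ ^ 2 * σ₁ - σ₂ * σ₁ ^ 2 + σ₂ ^ 3 - σ₁ ^ 3 - σ₂ ^ 2 + σ₁ ^ 2) = 0 := by
    rw [hB3]; exact sub_self _
  have d4 : σ₂ ^ 4 * σ₁ - σ₂ * σ₁ ^ 4 -
      (σ₂ ^ 2 * σ₁ - σ₂ * σ₁ ^ 2 + σ₂ ^ 4 - σ₁ ^ 4 - σ₂ ^ 2 + σ₁ ^ 2) = 0 := by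
    rw [hB4]; exact sub_self _
  have hT : σ₂ ^ 3 * σ₁ ^ 2 - σ₂ ^ 2 * σ₁ ^ 3 - σ₂ ^ 3 * σ₁ + σ₂ * σ₁ ^ 3 - σ₂ * σ₁ ^ 2 + σ₂ ^ 2 * σ₁ =
      (σ₁ * σ₂ * σ₁ - σ₂ * σ₁ * σ₂)
      - (σ₁ * σ₂ * σ₁ - σ₂ * σ₁ * σ₂) * σ₁
      + (σ₁ * σ₂ * σ₁ - σ₂ * σ₁ * σ₂) * (σ₁ * σ₂)
      - (σ₁ * σ₂ * σ₁ - σ₂ * σ₁ * σ₂) * (σ₂ * σ₁)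
      - σ₂ * (σ₁ * σ₂ * σ₁ - σ₂ * σ₁ * σ₂)
      + σ₁ * (σ₁ * σ₂ * σ₁ - σ₂ * σ₁ * σ₂) * σ₂
      + σ₁ * σ₂ * (σ₁ * σ₂ * σ₁ - σ₂ * σ₁ * σ₂)
      - σ₂ * σ₁ * (σ₁ * σ₂ * σ₁ - σ₂ * σ₁ * σ₂)
      - (σ₁ ^ 2 * σ₂ - σ₁ * σ₂ ^ 2 - (σ₁ ^ 2 - σ₂ ^ 2 + σ₂ - σ₁)) * σ₂
      - (σ₁ ^ 2 * σ₂ - σ₁ * σ₂ ^ 2 - (σ₁ ^ 2 - σ₂ ^ 2 + σ₂ - σ₁)) * (σ₁ * σ₂)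
      - σ₁ * (σ₁ ^ 2 * σ₂ - σ₁ * σ₂ ^ 2 - (σ₁ ^ 2 - σ₂ ^ 2 + σ₂ - σ₁))
      + σ₂ * (σ₁ ^ 2 * σ₂ - σ₁ * σ₂ ^ 2 - (σ₁ ^ 2 - σ₂ ^ 2 + σ₂ - σ₁)) * σ₁
      - σ₁ * σ₂ * (σ₁ ^ 2 * σ₂ - σ₁ * σ₂ ^ 2 - (σ₁ ^ 2 - σ₂ ^ 2 + σ₂ - σ₁))
      + (σ₂ ^ 3 * σ₁ - σ₂ * σ₁ ^ 3 -
          (σ₂ ^ 2 * σ₁ - σ₂ * σ₁ ^ 2 + σ₂ ^ 3 - σ₁ ^ 3 - σ₂ ^ 2 + σ₁ ^ 2)) * σ₁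
      + σ₂ * (σ₂ ^ 3 * σ₁ - σ₂ * σ₁ ^ 3 -
          (σ₂ ^ 2 * σ₁ - σ₂ * σ₁ ^ 2 + σ₂ ^ 3 - σ₁ ^ 3 - σ₂ ^ 2 + σ₁ ^ 2))
      - (σ₂ ^ 4 * σ₁ - σ₂ * σ₁ ^ 4 -
          (σ₂ ^ 2 * σ₁ - σ₂ * σ₁ ^ 2 + σ₂ ^ 4 - σ₁ ^ 4 - σ₂ ^ 2 + σ₁ ^ 2)) := by
    noncomm_ring
  simp only [d1, d2, d3, d4, mul_zero, zero_mul, sub_zero, add_zero, zero_add, zero_sub,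
    neg_zero] at hT
  set P : A := σ₂ ^ 2 * σ₁ - σ₂ * σ₁ ^ 2 + σ₁ ^ 2 - σ₂ ^ 2 with hP
  set a : A := 1 - z • σ₁ with ha
  set b : A := 1 - z • σ₂ with hb
  set u : A := Ring.inverse a with hu
  set v : A := Ring.inverse b with hv
  have key2 : σ₂ * P + P * σ₁ = σ₁ ^ 2 - σ₂ ^ 2 := by
    have e : σ₂ * P + P * σ₁ - (σ₁ ^ 2 - σ₂ ^ 2) = σ₂ ^ 3 * σ₁ - σ₂ * σ₁ ^ 3 -
        (σ₂ ^ 2 * σ₁ - σ₂ * σ₁ ^ 2 + σ₂ ^ 3 - σ₁ ^ 3 - σ₂ ^ 2 + σ₁ ^ 2) := by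
      rw [hP]; noncomm_ring
    rw [d3] at e
    exact sub_eq_zero.mp e
  have key3 : σ₂ * P * σ₁ = σ₂ * σ₁ ^ 2 - σ₂ ^ 2 * σ₁ := by
    have e : σ₂ * P * σ₁ - (σ₂ * σ₁ ^ 2 - σ₂ ^ 2 * σ₁) =
        σ₂ ^ 3 * σ₁ ^ 2 - σ₂ ^ 2 * σ₁ ^ 3 - σ₂ ^ 3 * σ₁ + σ₂ * σ₁ ^ 3 - σ₂ * σ₁ ^ 2 + σ₂ ^ 2 * σ₁ := by
      rw [hP]; noncomm_ring
    rw [hT] at e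
    exact sub_eq_zero.mp e
  have hua : u * a = 1 := Ring.inverse_mul_cancel a h1
  have hau : a * u = 1 := Ring.mul_inverse_cancel a h1
  have hvb : v * b = 1 := Ring.inverse_mul_cancel b h2
  have hbv : b * v = 1 := Ring.mul_inverse_cancel b h2
  have hby : b * σ₂ = σ₂ * b := by
    rw [hb]; simp [sub_mul, mul_sub, smul_mul_assoc, mul_smul_comm]
  have hbv2 : b * (σ₂ * v) = σ₂ := by
    rw [← mul_assoc, hby, mul_assoc, hbv, mul_one]
  have hH1 : Hfun σ₁ z = σ₁ * u := by
    simp only [Hfun]; rfl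
  have hH2 : Hfun σ₂ z = σ₂ * v := by
    simp only [Hfun]; rfl
  rw [hH1, hH2]
  have scancel : ∀ X Y : A, (z - 1) • X = (z - 1) • Y → X = Y := by
    intro X Y h
    have h' := congrArg (fun t => (z - 1)⁻¹ • t) h
    simpa only [inv_smul_smul₀ hz1] using h'
  have cancel : ∀ X Y : A, b * X * a = b * Y * a → X = Y := by
    intro X Y h
    have h' : b * X = b * Y := by
      have h2' := congrArg (fun w => w * u) h
      simpa only [mul_assoc, hau, mul_one] using h2'
    have h3' := congrArg (fun w => v * w) h'
    simpa only [← mul_assoc, hvb, one_mul] using h3'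
  apply scancel
  apply cancel
  have hLin : b * (σ₂ * (σ₁ * u) - σ₂ * v * σ₁) * a = b * σ₂ * σ₁ - σ₂ * (σ₁ * a) := by
    have e1 : b * (σ₂ * (σ₁ * u) - σ₂ * v * σ₁) * a =
        b * σ₂ * σ₁ * (u * a) - b * (σ₂ * v) * (σ₁ * a) := by noncomm_ring
    rw [e1, hua, mul_one, hbv2]
  have hRin : b * ((z / (z - 1)) • P + σ₂ - σ₁ + σ₁ * u - σ₂ * v) * a =
      (z / (z - 1)) • (b * P * a) + b * (σ₂ - σ₁) * a + b * σ₁ - σ₂ * a := by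
    have e2 : b * ((z / (z - 1)) • P + σ₂ - σ₁ + σ₁ * u - σ₂ * v) * a =
        b * ((z / (z - 1)) • P) * a + b * (σ₂ - σ₁) * a + b * σ₁ * (u * a) - b * (σ₂ * v) * a := by
      noncomm_ring
    rw [e2, hua, mul_one, hbv2, mul_smul_comm, smul_mul_assoc]
  have hbPa : b * P * a = P - z • (σ₁ ^ 2 - σ₂ ^ 2) + (z * z) • (σ₂ * σ₁ ^ 2 - σ₂ ^ 2 * σ₁) := by
    have e : b * P * a = P - z • (σ₂ * P + P * σ₁) + (z * z) • (σ₂ * P * σ₁) := by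
      rw [ha, hb]
      simp only [sub_mul, mul_sub, one_mul, mul_one, smul_mul_assoc, mul_smul_comm, smul_smul,
        smul_sub, smul_add, mul_assoc]
      match_scalars <;> ring
    rw [e, key2, key3]
  simp only [mul_smul_comm, smul_mul_assoc]
  rw [hLin, hRin, hbPa, hP, ha, hb]
  simp only [pow_two, sub_mul, mul_sub, add_mul, mul_add, one_mul, mul_one, smul_mul_assoc,
    mul_smul_comm, smul_smul, smul_sub, smul_add, mul_assoc]
  match_scalars <;> field_simp <;> ring
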